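/- Let H be a finite-dimensional complex inner product space with an orthonormal basis B, let ψ₁, …, ψ_k be k distinct elements of B, let d ≥ 1, and let α, β be unit vectors in ℂ^d with ⟪α, β⟫ ≠ 0. For each i ∈ {1,…,k} let αᵢ ∈ {α, β}. Then there exists an orthonormal basis C of H ⊗ ℂ^d such that every element of C is a simple tensor b ⊗ w with b ∈ B and w ∈ ℂ^d, and such that ψᵢ ⊗ αᵢ ∈ C for every i ∈ {1,…,k}. In particular, if the original set of states is completable (extends to an orthonormal product basis), then the appended set {ψᵢ ⊗ αᵢ} is also completable. -/

import Mathlib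

local notation "⟪" x ", " y "⟫" => @inner ℂ _ _ x y

/-- **Completability is preserved by appending nonorthogonal local states.**
Let `B` be an orthonormal basis of a finite-dimensional complex inner product space
`H`, let `ψ₁, …, ψ_k` be distinct elements of `B`, let `α, β` be nonorthogonal unit
vectors of `ℂ^d` (`d ≥ 1`) and choose `aᵢ ∈ {α, β}` for each `i`.  Then there is an
orthonormal basis `C` of `H ⊗ ℂ^d` consisting of simple tensors `b ⊗ w` with `b ∈ B`
and containing every `ψᵢ ⊗ aᵢ`.  Simple tensors are encoded as pairs `(b, w)`; since
`⟪u ⊗ x, v ⊗ y⟫ = ⟪u, v⟫·⟪x, y⟫`, the basis property is expressed by the family of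
pairs being orthonormal for this product and of cardinality `dim H · d`. -/
theorem appended_set_completable
    {H : Type*} [NormedAddCommGroup H] [InnerProductSpace ℂ H] [FiniteDimensional ℂ H]
    {ι : Type*} [Fintype ι] (B : OrthonormalBasis ι ℂ H)
    (k d : ℕ) (hd : 1 ≤ d)
    (ψ : Fin k → H) (hψB : ∀ i, ψ i ∈ Set.range B) (hψinj : Function.Injective ψ)
    (α β : EuclideanSpace ℂ (Fin d)) (hα : ‖α‖ = 1) (hβ : ‖β‖ = 1)
    (hαβ : ⟪α, β⟫ ≠ 0)
    (a : Fin k → EuclideanSpace ℂ (Fin d)) (ha : ∀ i, a i = α ∨ a i = β) :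
    ∃ (κ : Type) (_ : Fintype κ) (_ : DecidableEq κ) (C : κ → H × EuclideanSpace ℂ (Fin d)),
      Fintype.card κ = Fintype.card ι * d ∧
      (∀ t, (C t).1 ∈ Set.range B) ∧
      (∀ t t' : κ, ⟪(C t).1, (C t').1⟫ * ⟪(C t).2, (C t').2⟫
        = if t = t' then 1 else 0) ∧
      (∀ i : Fin k, ∃ t, C t = (ψ i, a i)) := by
  classical
  have hnorm : ∀ j : ι,
      ‖(if h : ∃ i, ψ i = B j then a h.choose else α : EuclideanSpace ℂ (Fin d))‖ = 1 := by
    intro j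
    split_ifs with h
    · rcases ha h.choose with h' | h' <;> rw [h'] <;> assumption
    · exact hα
  set f : ι → EuclideanSpace ℂ (Fin d) := fun j => if h : ∃ i, ψ i = B j then a h.choose else α with hf
  have hcard : Module.finrank ℂ (EuclideanSpace ℂ (Fin d)) = Fintype.card (Fin d) := by simp
  have hW : ∀ j : ι, ∃ W : OrthonormalBasis (Fin d) ℂ (EuclideanSpace ℂ (Fin d)), W ⟨0, hd⟩ = f j := by
    intro j
    have horth : Orthonormal ℂ (({⟨0, hd⟩} : Set (Fin d)).restrict fun _ => f j) := by
      constructor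
      · intro m; exact hnorm j
      · intro m m' hmm'
        exfalso
        apply hmm'
        have h2 := m.2; have h2' := m'.2
        simp only [Set.mem_singleton_iff] at h2 h2'
        exact Subtype.ext (h2.trans h2'.symm)
    obtain ⟨W, hWe⟩ := horth.exists_orthonormalBasis_extension_of_card_eq hcard
    exact ⟨W, hWe _ rfl⟩
  choose W hWf using hW
  -- the equivalence ι ≃ Fin (card ι)
  let e : Fin (Fintype.card ι) ≃ ι := (Fintype.equivFin ι).symm
  refine ⟨Fin (Fintype.card ι) × Fin d, inferInstance, inferInstance,
    fun t => (B (e t.1), W (e t.1) t.2), by simp [Fintype.card_prod], fun t => ⟨e t.1, rfl⟩,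
    ?_, ?_⟩
  · intro t t'
    rcases t with ⟨j, m⟩; rcases t' with ⟨j', m'⟩
    by_cases hj : j = j'
    · subst hj
      have h1 : ⟪B (e j), B (e j)⟫ = 1 := by
        simpa using (orthonormal_iff_ite.mp B.orthonormal (e j) (e j))
      have h2 : ⟪W (e j) m, W (e j) m'⟫ = if m = m' then 1 else 0 := by
        simpa using (orthonormal_iff_ite.mp (W (e j)).orthonormal m m')
      simp [h1, h2, Prod.ext_iff]
    · have h1 : ⟪B (e j), B (e j')⟫ = 0 := by
        have := orthonormal_iff_ite.mp B.orthonormal (e j) (e j')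
        simpa [e.injective.ne hj] using this
      simp [h1, Prod.ext_iff, hj]
  · intro i
    obtain ⟨j, hj⟩ := hψB i
    have hex : ∃ i', ψ i' = B j := ⟨i, hj.symm⟩
    have hch : hex.choose = i := hψinj (hex.choose_spec.trans hj)
    refine ⟨⟨(Fintype.equivFin ι) j, ⟨0, hd⟩⟩, ?_⟩
    have hej : e ((Fintype.equivFin ι) j) = j := Equiv.symm_apply_apply _ _
    have h2 : (W j) ⟨0, hd⟩ = a i := by
      rw [hWf j]; exact (dif_pos hex).trans (congrArg a hch)
    simp only [hej, h2, hj]
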